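/- arXiv:2003.06065 — 3 statements merged into one kernel-verified Lean document; each statement's English description precedes it below -/
import Mathlib

section
/- Let λ, μ > 0 with λ ≠ μ, H > 0, and for 0 ≤ D ≤ H define P_{H,0}(D) = λ(e^{(μ−λ)D} − 1)/(μ·e^{(μ−λ)H} − λ). Then μ·∫_0^H e^{−μx} P_{H,0}(x) dx + e^{−μH} = (μ−λ)/(μ·e^{(μ−λ)H} − λ). -/
open Real

lemma int_exp_mul (c H : ℝ) (hc : c ≠ 0) :
    ∫ x in (0:ℝ)..H, Real.exp (c * x) = (Real.exp (c * H) - 1) / c := by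
  rw [intervalIntegral.integral_comp_mul_left (f := fun x => Real.exp x) hc]
  rw [integral_exp]
  simp [smul_eq_mul]
  field_simp

theorem stmt4 (l m H : ℝ) (hl : 0 < l) (hm : 0 < m) (hne : l ≠ m) (hH : 0 < H) :
    m * (∫ x in (0:ℝ)..H,
        Real.exp (-m * x) * (l * (Real.exp ((m - l) * x) - 1) / (m * Real.exp ((m - l) * H) - l)))
      + Real.exp (-m * H)
      = (m - l) / (m * Real.exp ((m - l) * H) - l) := by
  set c : ℝ := m * Real.exp ((m - l) * H) - l with hc
  have hcne : c ≠ 0 := by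
    rcases lt_or_gt_of_ne hne with h | h
    · have : (1:ℝ) < Real.exp ((m - l) * H) := by
        rw [Real.one_lt_exp_iff]; nlinarith
      nlinarith
    · have : Real.exp ((m - l) * H) < 1 := by
        rw [Real.exp_lt_one_iff]; nlinarith
      nlinarith
  have hcongr : ∀ x : ℝ,
      Real.exp (-m * x) * (l * (Real.exp ((m - l) * x) - 1) / c)
        = (l / c) * Real.exp (-l * x) - (l / c) * Real.exp (-m * x) := by
    intro x
    have hx : Real.exp (-l * x) = Real.exp (-m * x) * Real.exp ((m - l) * x) := by
      rw [← Real.exp_add]; ring_nf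
    rw [hx]; ring
  rw [intervalIntegral.integral_congr (g :=
      fun x => (l / c) * Real.exp (-l * x) - (l / c) * Real.exp (-m * x))
      (fun x _ => hcongr x)]
  have hil : IntervalIntegrable (fun x => Real.exp (-l * x)) MeasureTheory.volume 0 H :=
    (Real.continuous_exp.comp (continuous_const.mul continuous_id)).intervalIntegrable _ _
  have him : IntervalIntegrable (fun x => Real.exp (-m * x)) MeasureTheory.volume 0 H :=
    (Real.continuous_exp.comp (continuous_const.mul continuous_id)).intervalIntegrable _ _
  rw [intervalIntegral.integral_sub (hil.const_mul _) (him.const_mul _),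
      intervalIntegral.integral_const_mul, intervalIntegral.integral_const_mul,
      int_exp_mul (-l) H (by linarith), int_exp_mul (-m) H (by linarith)]
  have key : Real.exp (-l * H) = Real.exp (-m * H) * Real.exp ((m - l) * H) := by
    rw [← Real.exp_add]; ring_nf
  rw [key, hc]
  have h1 : Real.exp ((m - l) * H) > 0 := Real.exp_pos _
  have hcne' : m * Real.exp ((m - l) * H) - l ≠ 0 := hcne
  field_simp
  ring
end

section
/- For fixed μ > 0 and H > 0, the limit as λ → μ of E(C_{0,0})(λ) = 2λ{λ − μe^{2H(μ−λ)} + (μ−λ)e^{H(μ−λ)}[1 + H(λ+μ)]}/((λ−μ)(λ − μe^{H(μ−λ)})²) equals μH²(3 + 2μH)/(3(1 + μH)²). -/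
open Real Filter Topology

noncomputable def rho (x : ℝ) : ℝ := (Real.exp x - 1 - x - x ^ 2 / 2 - x ^ 3 / 6) / x ^ 3

lemma rho_exp (x : ℝ) : Real.exp x = 1 + x + x ^ 2 / 2 + x ^ 3 / 6 + x ^ 3 * rho x := by
  rcases eq_or_ne x 0 with h | h
  · simp [rho, h]
  · unfold rho
    field_simp
    ring

lemma rho_zero : rho 0 = 0 := by simp [rho]

lemma rho_bound {x : ℝ} (hx : |x| ≤ 1) : |rho x| ≤ |x| * (5 / 96) := by
  rcases eq_or_ne x 0 with h | h
  · simp [h, rho_zero]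
  · have hb := Real.exp_bound hx (n := 4) (by norm_num)
    have hsum : ∑ m ∈ Finset.range 4, x ^ m / m.factorial = 1 + x + x ^ 2 / 2 + x ^ 3 / 6 := by
      norm_num [Finset.sum_range_succ, Nat.factorial]
    rw [hsum] at hb
    have h3 : (0:ℝ) < |x| ^ 3 := by positivity
    have : |rho x| = |Real.exp x - 1 - x - x ^ 2 / 2 - x ^ 3 / 6| / |x| ^ 3 := by
      rw [rho, abs_div, abs_pow]
    rw [this]
    rw [div_le_iff₀ h3]
    calc |Real.exp x - 1 - x - x ^ 2 / 2 - x ^ 3 / 6|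
        = |Real.exp x - (1 + x + x ^ 2 / 2 + x ^ 3 / 6)| := by ring_nf
      _ ≤ |x| ^ 4 * ((4:ℕ).succ / ((4:ℕ).factorial * 4)) := hb
      _ = |x| * 5 / 96 * |x| ^ 3 := by
          simp [Nat.factorial]
          ring
      _ = |x| * (5 / 96) * |x| ^ 3 := by ring

lemma continuousAt_rho_zero : ContinuousAt rho 0 := by
  rw [ContinuousAt, rho_zero]
  refine squeeze_zero_norm' (a := fun x => |x| * (5 / 96)) ?_ ?_
  · filter_upwards [eventually_abs_sub_lt (0:ℝ) one_pos] with x hx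
    exact rho_bound (le_of_lt (by simpa using hx))
  · have : ContinuousAt (fun x : ℝ => |x| * (5 / 96)) 0 := by fun_prop
    simpa [ContinuousAt] using this

@[fun_prop]
lemma continuous_rho : Continuous rho := by
  rw [continuous_iff_continuousAt]
  intro x
  rcases eq_or_ne x 0 with h | h
  · exact h ▸ continuousAt_rho_zero
  · exact ContinuousAt.div (by fun_prop) (by fun_prop) (pow_ne_zero 3 h)

lemma alg (l m H a b : ℝ) (h : l - m ≠ 0) :
    2 * l * (l - m * (1 + 2 * H * (m - l) + (2 * H * (m - l)) ^ 2 / 2 +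
          (2 * H * (m - l)) ^ 3 / 6 + (2 * H * (m - l)) ^ 3 * b) +
        (m - l) * (1 + H * (m - l) + (H * (m - l)) ^ 2 / 2 + (H * (m - l)) ^ 3 / 6 +
          (H * (m - l)) ^ 3 * a) * (1 + H * (l + m))) /
      ((l - m) * (l - m * (1 + H * (m - l) + (H * (m - l)) ^ 2 / 2 + (H * (m - l)) ^ 3 / 6 +
          (H * (m - l)) ^ 3 * a)) ^ 2) =
    2 * l * (H ^ 2 / 2 + m * H ^ 3 / 3 + 8 * m * H ^ 3 * b +
        (l - m) * (-(H ^ 3) / 2 + (1 / 6 + a) * (1 + 2 * m * H) * H ^ 3) +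
        (l - m) ^ 2 * (1 / 6 + a) * H ^ 4) /
      (1 + m * H * (1 - H * (l - m) / 2 + H ^ 2 * (l - m) ^ 2 * (1 / 6 + a))) ^ 2 := by
  rw [show 2 * l * (l - m * (1 + 2 * H * (m - l) + (2 * H * (m - l)) ^ 2 / 2 +
          (2 * H * (m - l)) ^ 3 / 6 + (2 * H * (m - l)) ^ 3 * b) +
        (m - l) * (1 + H * (m - l) + (H * (m - l)) ^ 2 / 2 + (H * (m - l)) ^ 3 / 6 +
          (H * (m - l)) ^ 3 * a) * (1 + H * (l + m))) =
      (l - m) ^ 3 * (2 * l * (H ^ 2 / 2 + m * H ^ 3 / 3 + 8 * m * H ^ 3 * b +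
        (l - m) * (-(H ^ 3) / 2 + (1 / 6 + a) * (1 + 2 * m * H) * H ^ 3) +
        (l - m) ^ 2 * (1 / 6 + a) * H ^ 4)) from by ring,
    show ((l - m) * (l - m * (1 + H * (m - l) + (H * (m - l)) ^ 2 / 2 + (H * (m - l)) ^ 3 / 6 +
          (H * (m - l)) ^ 3 * a)) ^ 2) =
      (l - m) ^ 3 * (1 + m * H * (1 - H * (l - m) / 2 + H ^ 2 * (l - m) ^ 2 * (1 / 6 + a))) ^ 2
      from by ring,
    mul_div_mul_left _ _ (pow_ne_zero 3 h)]

theorem stmt10 (m H : ℝ) (hm : 0 < m) (hH : 0 < H) :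
    Tendsto (fun l : ℝ =>
        2 * l * (l - m * Real.exp (2 * H * (m - l)) +
            (m - l) * Real.exp (H * (m - l)) * (1 + H * (l + m))) /
          ((l - m) * (l - m * Real.exp (H * (m - l))) ^ 2))
      (𝓝[≠] m) (𝓝 (m * H ^ 2 * (3 + 2 * m * H) / (3 * (1 + m * H) ^ 2))) := by
  set g : ℝ → ℝ := fun l =>
    2 * l * (H ^ 2 / 2 + m * H ^ 3 / 3 + 8 * m * H ^ 3 * rho (2 * H * (m - l)) +
        (l - m) * (-(H ^ 3) / 2 + (1 / 6 + rho (H * (m - l))) * (1 + 2 * m * H) * H ^ 3) +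
        (l - m) ^ 2 * (1 / 6 + rho (H * (m - l))) * H ^ 4) /
      (1 + m * H * (1 - H * (l - m) / 2 + H ^ 2 * (l - m) ^ 2 * (1 / 6 + rho (H * (m - l))))) ^ 2
    with hg
  have heq : (fun l : ℝ =>
      2 * l * (l - m * Real.exp (2 * H * (m - l)) +
            (m - l) * Real.exp (H * (m - l)) * (1 + H * (l + m))) /
          ((l - m) * (l - m * Real.exp (H * (m - l))) ^ 2)) =ᶠ[𝓝[≠] m] g := by
    filter_upwards [self_mem_nhdsWithin] with l hl
    have hlm : l - m ≠ 0 := sub_ne_zero.mpr hl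
    rw [rho_exp (2 * H * (m - l)), rho_exp (H * (m - l)), hg]
    exact alg l m H (rho (H * (m - l))) (rho (2 * H * (m - l))) hlm
  have hcont : ContinuousAt g m := by
    apply ContinuousAt.div (by fun_prop) (by fun_prop)
    have hden : (0:ℝ) < 1 + m * H := by positivity
    simp only [sub_self, mul_zero, rho_zero, zero_div, add_zero, sub_zero, zero_mul, mul_one]
    positivity
  have hgm : g m = m * H ^ 2 * (3 + 2 * m * H) / (3 * (1 + m * H) ^ 2) := by
    have hden : (1 + m * H) ≠ 0 := by positivity
    simp only [hg, sub_self, mul_zero, rho_zero]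
    field_simp
    ring
  have := hcont.continuousWithinAt (s := {m}ᶜ)
  rw [ContinuousWithinAt, hgm] at this
  exact this.congr' heq.symm
end

section
/- Let L₁, L₁* ≥ 0, α ∈ (0,1), and 0 < P0H, PH0 < 1. Define ϑ = 1 − P0H − PH0, and for j ≥ 0 set P00^{(j)} = (PH0 + P0H ϑ^j)/(P0H+PH0), P0H^{(j)} = (P0H − P0H ϑ^j)/(P0H+PH0), PH0^{(j)} = (PH0 − PH0 ϑ^j)/(P0H+PH0), PHH^{(j)} = (P0H + PH0 ϑ^j)/(P0H+PH0). Then the sum S = L₁[α + α(1−α)(1−P0H) + (2−P0H)(1−α)²] + L₁*[α(1−α)P0H + P0H(1−α)²] + L₁ P00^{(2)} Σ_{j≥0}(1−α)^{j+2}P00^{(j)} + L₁ P0H^{(2)} Σ_{j≥1}(1−α)^{j+2}PH0^{(j)} + L₁* P0H^{(2)} Σ_{j≥0}(1−α)^{j+2}PHH^{(j)} + L₁* P00^{(2)} Σ_{j≥1}(1−α)^{j+2}P0H^{(j)} equals the closed form L₁[1 − α(1−α) + (1−α)(1−P0H) + (1−α)²(1 − P0H(2−P0H−PH0))/(α + (1−α)(P0H+PH0))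 + ((1−α)³/α)·PH0/(α + (1−α)(P0H+PH0))] + L₁* P0H (1−α)[α + (1−α)(2 + (1−P0H−PH0)α)/(α + (1−α)(P0H+PH0)) + ((1−α)²/α)/(α + (1−α)(P0H+PH0))]. -/
set_option maxHeartbeats 2000000


/-- Entries of the `j`-th power of the phase-transition matrix. -/
noncomputable def P00j (P0H PH0 : ℝ) (j : ℕ) : ℝ :=
  (PH0 + P0H * (1 - P0H - PH0) ^ j) / (P0H + PH0)

noncomputable def P0Hj (P0H PH0 : ℝ) (j : ℕ) : ℝ :=
  (P0H - P0H * (1 - P0H - PH0) ^ j) / (P0H + PH0)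

noncomputable def PH0j (P0H PH0 : ℝ) (j : ℕ) : ℝ :=
  (PH0 - PH0 * (1 - P0H - PH0) ^ j) / (P0H + PH0)

noncomputable def PHHj (P0H PH0 : ℝ) (j : ℕ) : ℝ :=
  (P0H + PH0 * (1 - P0H - PH0) ^ j) / (P0H + PH0)

lemma key_tsum (r t a b : ℝ) (hr : |r| < 1) (ht : |r * t| < 1) :
    ∑' j : ℕ, r ^ j * (a + b * t ^ j) = a * (1 - r)⁻¹ + b * (1 - r * t)⁻¹ := by
  have h1 : Summable fun j : ℕ => r ^ j := summable_geometric_of_abs_lt_one hr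
  have h2 : Summable fun j : ℕ => (r * t) ^ j := summable_geometric_of_abs_lt_one ht
  have hc : ∀ j : ℕ, r ^ j * (a + b * t ^ j) = a * r ^ j + b * (r * t) ^ j := by
    intro j; rw [mul_pow]; ring
  rw [tsum_congr hc, Summable.tsum_add (h1.mul_left a) (h2.mul_left b), tsum_mul_left,
    tsum_mul_left, tsum_geometric_of_abs_lt_one hr, tsum_geometric_of_abs_lt_one ht]

theorem stmt19 (L1 L1s α P0H PH0 : ℝ)
    (hL1 : 0 ≤ L1) (hL1s : 0 ≤ L1s) (hα : 0 < α) (hα' : α < 1)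
    (h0H : 0 < P0H) (h0H' : P0H < 1) (hH0 : 0 < PH0) (hH0' : PH0 < 1) :
    L1 * (α + α * (1 - α) * (1 - P0H) + (2 - P0H) * (1 - α) ^ 2)
      + L1s * (α * (1 - α) * P0H + P0H * (1 - α) ^ 2)
      + L1 * P00j P0H PH0 2 * (∑' j : ℕ, (1 - α) ^ (j + 2) * P00j P0H PH0 j)
      + L1 * P0Hj P0H PH0 2 * (∑' j : ℕ, (1 - α) ^ ((j + 1) + 2) * PH0j P0H PH0 (j + 1))
      + L1s * P0Hj P0H PH0 2 * (∑' j : ℕ, (1 - α) ^ (j + 2) * PHHj P0H PH0 j)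
      + L1s * P00j P0H PH0 2 * (∑' j : ℕ, (1 - α) ^ ((j + 1) + 2) * P0Hj P0H PH0 (j + 1))
    = L1 * (1 - α * (1 - α) + (1 - α) * (1 - P0H)
          + (1 - α) ^ 2 * (1 - P0H * (2 - P0H - PH0)) / (α + (1 - α) * (P0H + PH0))
          + ((1 - α) ^ 3 / α) * (PH0 / (α + (1 - α) * (P0H + PH0))))
      + L1s * P0H * (1 - α) *
          (α + (1 - α) * (2 + (1 - P0H - PH0) * α) / (α + (1 - α) * (P0H + PH0))
            + ((1 - α) ^ 2 / α) * (1 / (α + (1 - α) * (P0H + PH0)))) := by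
  set r : ℝ := 1 - α with hrdef
  set t : ℝ := 1 - P0H - PH0 with htdef
  set s : ℝ := P0H + PH0 with hsdef
  have hs : 0 < s := by positivity
  have hr : |r| < 1 := by rw [abs_lt]; constructor <;> simp [hrdef] <;> linarith
  have ht' : |t| < 1 := by rw [abs_lt]; constructor <;> simp [htdef] <;> linarith
  have hr0 : 0 ≤ r := by simp [hrdef]; linarith
  have hrt : |r * t| < 1 := by
    rw [abs_mul]
    nlinarith [abs_nonneg r, abs_nonneg t]
  have hD : 0 < 1 - r * t := by
    have := abs_lt.mp hrt; linarith [this.2]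
  have hαr : 1 - r = α := by simp [hrdef]
  have T1 : (∑' j : ℕ, r ^ (j + 2) * P00j P0H PH0 j)
      = r ^ 2 * ((PH0 / s) * α⁻¹ + (P0H / s) * (1 - r * t)⁻¹) := by
    have : ∀ j : ℕ, r ^ (j + 2) * P00j P0H PH0 j
        = r ^ 2 * (r ^ j * (PH0 / s + (P0H / s) * t ^ j)) := by
      intro j; simp only [P00j, pow_add, ← htdef, ← hsdef]; field_simp
    rw [tsum_congr this, tsum_mul_left, key_tsum _ _ _ _ hr hrt, hαr]
  have T2 : (∑' j : ℕ, r ^ ((j + 1) + 2) * PH0j P0H PH0 (j + 1))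
      = r ^ 3 * ((PH0 / s) * α⁻¹ + (-(PH0 * t) / s) * (1 - r * t)⁻¹) := by
    have : ∀ j : ℕ, r ^ ((j + 1) + 2) * PH0j P0H PH0 (j + 1)
        = r ^ 3 * (r ^ j * (PH0 / s + (-(PH0 * t) / s) * t ^ j)) := by
      intro j; simp only [PH0j, pow_add, pow_succ, ← htdef, ← hsdef]; field_simp; ring
    rw [tsum_congr this, tsum_mul_left, key_tsum _ _ _ _ hr hrt, hαr]
  have T3 : (∑' j : ℕ, r ^ (j + 2) * PHHj P0H PH0 j)
      = r ^ 2 * ((P0H / s) * α⁻¹ + (PH0 / s) * (1 - r * t)⁻¹) := by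
    have : ∀ j : ℕ, r ^ (j + 2) * PHHj P0H PH0 j
        = r ^ 2 * (r ^ j * (P0H / s + (PH0 / s) * t ^ j)) := by
      intro j; simp only [PHHj, pow_add, ← htdef, ← hsdef]; field_simp
    rw [tsum_congr this, tsum_mul_left, key_tsum _ _ _ _ hr hrt, hαr]
  have T4 : (∑' j : ℕ, r ^ ((j + 1) + 2) * P0Hj P0H PH0 (j + 1))
      = r ^ 3 * ((P0H / s) * α⁻¹ + (-(P0H * t) / s) * (1 - r * t)⁻¹) := by
    have : ∀ j : ℕ, r ^ ((j + 1) + 2) * P0Hj P0H PH0 (j + 1)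
        = r ^ 3 * (r ^ j * (P0H / s + (-(P0H * t) / s) * t ^ j)) := by
      intro j; simp only [P0Hj, pow_add, pow_succ, ← htdef, ← hsdef]; field_simp; ring
    rw [tsum_congr this, tsum_mul_left, key_tsum _ _ _ _ hr hrt, hαr]
  rw [T1, T2, T3, T4]
  simp only [P00j, P0Hj, hrdef, htdef, hsdef]
  have hα0 : α ≠ 0 := ne_of_gt hα
  have hs0 : P0H + PH0 ≠ 0 := ne_of_gt (by linarith)
  have hD0' : α + (1 - α) * (P0H + PH0) ≠ 0 := ne_of_gt (by nlinarith)
  have hE0 : 1 - (1 - α) * (1 - P0H - PH0) ≠ 0 := by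
    rw [show 1 - (1 - α) * (1 - P0H - PH0) = α + (1 - α) * (P0H + PH0) from by ring]
    exact hD0'
  rw [show α + (1 - α) * (P0H + PH0) = 1 - (1 - α) * (1 - P0H - PH0) from by ring]
  field_simp
  ring
end
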